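/- Canonical form of a helicoidal Killing vector: if A, C ∈ ℝ³ with C ≠ 0, then there exist λ ∈ SO(3) and δ ∈ ℝ³ such that λᵀ(A + δ × C) = (0, 0, ⟨A,C⟩/‖C‖) and λᵀC = (0, 0, ‖C‖); hence λᵀ V_{A,C}(λ x̃ + δ) = ã·e₃ + x̃ × (c̃·e₃) with ã = ⟨A,C⟩/‖C‖ and c̃ = ‖C‖. If in addition ⟨A, C⟩ ≠ 0 (i.e. Δ₁ ≠ 0 and Δ₂ ≠ 0), then both ã ≠ 0 and c̃ ≠ 0. -/

import Mathlib

open Matrix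

/-- 3×3 real matrices. -/
abbrev M3 := Matrix (Fin 3) (Fin 3) ℝ

/-- Membership in SO(3). -/
def SO3 (l : M3) : Prop := lᵀ * l = 1 ∧ l.det = 1

/-- The Killing vector field `V_{A,C}(x) = A + x × C`. -/
def VAC (A C : Fin 3 → ℝ) (x : Fin 3 → ℝ) : Fin 3 → ℝ :=
  A + crossProduct x C

/-- Equivariance of the cross product: `Mᵀ((Mu) × (Mv)) = det M • (u × v)`. -/
lemma cross_equiv (M : M3) (u v : Fin 3 → ℝ) :
    Mᵀ.mulVec (crossProduct (M.mulVec u) (M.mulVec v)) = M.det • crossProduct u v := by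
  ext i
  fin_cases i <;>
    simp [Matrix.mulVec, dotProduct, cross_apply, Matrix.det_fin_three,
      Fin.sum_univ_three, Matrix.transpose_apply] <;> ring

/-- The rotation used in the generic case. -/
noncomputable def Lgen (c0 c1 c2 m n : ℝ) : M3 :=
  !![-c1 / m, -c2 * c0 / (n * m), c0 / n;
     c0 / m, -c2 * c1 / (n * m), c1 / n;
     0, m / n, c2 / n]

lemma Lgen_transpose (c0 c1 c2 m n : ℝ) : (Lgen c0 c1 c2 m n)ᵀ =
    !![-c1 / m, c0 / m, 0;
       -c2 * c0 / (n * m), -c2 * c1 / (n * m), m / n;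
       c0 / n, c1 / n, c2 / n] := by
  ext i j; fin_cases i <;> fin_cases j <;> rfl

lemma Lgen_ortho (c0 c1 c2 m n : ℝ) (hm : m ≠ 0) (hn : n ≠ 0)
    (hm2 : m ^ 2 = c0 * c0 + c1 * c1) (hn2 : n ^ 2 = c0 * c0 + c1 * c1 + c2 * c2) :
    (Lgen c0 c1 c2 m n)ᵀ * Lgen c0 c1 c2 m n = 1 := by
  rw [Lgen_transpose, Lgen, Matrix.one_fin_three]
  ext i j
  fin_cases i <;> fin_cases j <;>
      norm_num [Matrix.mul_apply, Fin.sum_univ_three, Matrix.cons_val_two, Matrix.vecHead, Matrix.vecTail] <;> field_simp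
  · linear_combination -hm2
  · ring
  · ring
  · ring
  · linear_combination (m^2-c2^2)*hm2 - m^2*hn2
  · linear_combination c2*hm2
  · ring
  · linear_combination c2*hm2
  · linear_combination -hn2

lemma Lgen_det (c0 c1 c2 m n : ℝ) (hm : m ≠ 0) (hn : n ≠ 0)
    (hm2 : m ^ 2 = c0 * c0 + c1 * c1) (hn2 : n ^ 2 = c0 * c0 + c1 * c1 + c2 * c2) :
    (Lgen c0 c1 c2 m n).det = 1 := by
  rw [Matrix.det_fin_three, Lgen]
  norm_num [Matrix.cons_val_two, Matrix.vecHead, Matrix.vecTail]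
  field_simp
  linear_combination -c2^2*hm2 - m^2*hn2

lemma Lgen_mulVec (c0 c1 c2 m n : ℝ) (C : Fin 3 → ℝ) (hm : m ≠ 0) (hn : n ≠ 0)
    (hc0 : C 0 = c0) (hc1 : C 1 = c1) (hc2 : C 2 = c2)
    (hm2 : m ^ 2 = c0 * c0 + c1 * c1) (hn2 : n ^ 2 = c0 * c0 + c1 * c1 + c2 * c2) :
    (Lgen c0 c1 c2 m n)ᵀ.mulVec C = ![0, 0, n] := by
  rw [Lgen_transpose]
  ext i
  fin_cases i <;>
    norm_num [Matrix.mulVec, dotProduct, Fin.sum_univ_three, hc0, hc1, hc2, Matrix.cons_val_two, Matrix.vecHead, Matrix.vecTail] <;>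
      field_simp
  · ring
  · linear_combination c2*hm2
  · linear_combination -hn2

/-- The rotation used when `C = (0,0,c)` with `c < 0`. -/
def Lneg : M3 := !![1, 0, 0; 0, -1, 0; 0, 0, -1]

lemma Lneg_transpose : Lnegᵀ = Lneg := by
  ext i j; fin_cases i <;> fin_cases j <;> rfl

lemma Lneg_SO3 : SO3 Lneg := by
  constructor
  · rw [Lneg_transpose, Lneg, Matrix.one_fin_three]
    ext i j
    fin_cases i <;> fin_cases j <;> norm_num [Matrix.mul_apply, Fin.sum_univ_three, Matrix.cons_val_two, Matrix.vecHead, Matrix.vecTail]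
  · rw [Lneg]
    norm_num [Matrix.det_fin_three, Matrix.cons_val_two, Matrix.vecHead, Matrix.vecTail]

/-- STATEMENT 7: canonical form of a helicoidal Killing vector: if `C ≠ 0`, there
are `λ ∈ SO(3)` and `δ ∈ ℝ³` with `λᵀ(A + δ × C) = (0,0,⟨A,C⟩/‖C‖)` and
`λᵀC = (0,0,‖C‖)`, so the pulled-back field is `ã e₃ + x̃ × (c̃ e₃)` with
`ã = ⟨A,C⟩/‖C‖`, `c̃ = ‖C‖`; if moreover `⟨A,C⟩ ≠ 0` then `ã ≠ 0` and `c̃ ≠ 0`. -/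
theorem helicoidal_Killing_vector_canonical_form
    (A C : Fin 3 → ℝ) (hC : C ≠ 0) :
    ∃ (l : M3) (δ : Fin 3 → ℝ), SO3 l ∧
      lᵀ.mulVec (A + crossProduct δ C) =
        ![0, 0, A ⬝ᵥ C / Real.sqrt (C ⬝ᵥ C)] ∧
      lᵀ.mulVec C = ![0, 0, Real.sqrt (C ⬝ᵥ C)] ∧
      (∀ xt : Fin 3 → ℝ,
        lᵀ.mulVec (VAC A C (l.mulVec xt + δ)) =
          ![0, 0, A ⬝ᵥ C / Real.sqrt (C ⬝ᵥ C)]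
            + crossProduct xt ![0, 0, Real.sqrt (C ⬝ᵥ C)]) ∧
      (A ⬝ᵥ C ≠ 0 →
        A ⬝ᵥ C / Real.sqrt (C ⬝ᵥ C) ≠ 0 ∧ Real.sqrt (C ⬝ᵥ C) ≠ 0) := by
  set s : ℝ := C ⬝ᵥ C with hs_def
  have hs_eq : s = C 0 * C 0 + C 1 * C 1 + C 2 * C 2 := by
    simp [hs_def, dotProduct, Fin.sum_univ_three]
  have hs_pos : 0 < s := by
    have h0 : s ≠ 0 := fun h => hC (dotProduct_self_eq_zero.mp h)
    have h1 : 0 ≤ s := by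
      rw [hs_eq]; nlinarith [sq_nonneg (C 0), sq_nonneg (C 1), sq_nonneg (C 2)]
    exact lt_of_le_of_ne h1 (Ne.symm h0)
  set n : ℝ := Real.sqrt s with hn_def
  have hn_pos : 0 < n := Real.sqrt_pos.mpr hs_pos
  have hn2 : n ^ 2 = s := Real.sq_sqrt hs_pos.le
  suffices h : ∃ l : M3, SO3 l ∧ lᵀ.mulVec C = ![0, 0, n] by
    obtain ⟨l, ⟨hortho, hdet⟩, h3⟩ := h
    have hinv : l * lᵀ = 1 := mul_eq_one_comm.mp hortho
    set a : ℝ := A ⬝ᵥ C with ha_def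
    have ha : a = A 0 * C 0 + A 1 * C 1 + A 2 * C 2 := by
      simp [ha_def, dotProduct, Fin.sum_univ_three]
    set δ : Fin 3 → ℝ := s⁻¹ • crossProduct A C with hδ_def
    have hAdel : A + crossProduct δ C = (a / s) • C := by
      ext i
      fin_cases i
      · simp [hδ_def, cross_apply, Pi.smul_apply, smul_eq_mul, ha]
        field_simp
        linear_combination A 0 * hs_eq
      · simp [hδ_def, cross_apply, Pi.smul_apply, smul_eq_mul, ha]
        field_simp
        linear_combination A 1 * hs_eq
      · simp [hδ_def, cross_apply, Pi.smul_apply, smul_eq_mul, ha]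
        field_simp
        linear_combination A 2 * hs_eq
    have h2 : lᵀ.mulVec (A + crossProduct δ C) = ![0, 0, a / n] := by
      rw [hAdel, Matrix.mulVec_smul, h3]
      ext i
      fin_cases i <;> simp [Pi.smul_apply, smul_eq_mul]
      rw [div_mul_eq_mul_div, div_eq_div_iff hs_pos.ne' hn_pos.ne']
      linear_combination a * hn2
    refine ⟨l, δ, ⟨hortho, hdet⟩, h2, h3, ?_, ?_⟩
    · intro xt
      have hC' : l.mulVec (lᵀ.mulVec C) = C := by
        rw [Matrix.mulVec_mulVec, hinv, Matrix.one_mulVec]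
      have hsplit : VAC A C (l.mulVec xt + δ) =
          (A + crossProduct δ C) + crossProduct (l.mulVec xt) C := by
        simp only [VAC, map_add, LinearMap.add_apply]
        abel
      have hcross : lᵀ.mulVec (crossProduct (l.mulVec xt) C) =
          crossProduct xt ![0, 0, n] := by
        conv_lhs => rw [← hC']
        rw [cross_equiv, hdet, one_smul, h3]
      rw [hsplit, Matrix.mulVec_add, h2, hcross]
    · intro haC
      exact ⟨div_ne_zero haC hn_pos.ne', hn_pos.ne'⟩
  by_cases h01 : C 0 = 0 ∧ C 1 = 0
  · obtain ⟨h0, h1⟩ := h01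
    have h2ne : C 2 ≠ 0 := by
      intro h2
      apply hC; ext i; fin_cases i <;> simp [h0, h1, h2]
    rcases lt_or_gt_of_ne h2ne with hneg | hpos
    · refine ⟨Lneg, Lneg_SO3, ?_⟩
      have hnval : n = -(C 2) := by
        rw [hn_def, hs_eq, h0, h1]
        rw [show (0:ℝ) * 0 + 0 * 0 + C 2 * C 2 = (-(C 2)) ^ 2 by ring]
        exact Real.sqrt_sq (by linarith)
      rw [Lneg_transpose, Lneg]
      ext i
      fin_cases i <;>
        norm_num [Matrix.mulVec, dotProduct, Fin.sum_univ_three, h0, h1, hnval, Matrix.cons_val_two, Matrix.vecHead, Matrix.vecTail]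
    · refine ⟨1, ⟨by simp, by simp⟩, ?_⟩
      have hnval : n = C 2 := by
        rw [hn_def, hs_eq, h0, h1]
        rw [show (0:ℝ) * 0 + 0 * 0 + C 2 * C 2 = (C 2) ^ 2 by ring]
        exact Real.sqrt_sq hpos.le
      rw [Matrix.transpose_one, Matrix.one_mulVec]
      ext i
      fin_cases i <;> simp [h0, h1, hnval]
  · have hm2_pos : 0 < C 0 * C 0 + C 1 * C 1 := by
      rcases not_and_or.mp h01 with h | h
      · have := mul_self_pos.mpr h
        nlinarith [mul_self_nonneg (C 1)]
      · have := mul_self_pos.mpr h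
        nlinarith [mul_self_nonneg (C 0)]
    set m : ℝ := Real.sqrt (C 0 * C 0 + C 1 * C 1) with hm_def
    have hm_pos : 0 < m := Real.sqrt_pos.mpr hm2_pos
    have hm2 : m ^ 2 = C 0 * C 0 + C 1 * C 1 := Real.sq_sqrt hm2_pos.le
    have hn2' : n ^ 2 = C 0 * C 0 + C 1 * C 1 + C 2 * C 2 := hn2.trans hs_eq
    exact ⟨Lgen (C 0) (C 1) (C 2) m n,
      ⟨Lgen_ortho _ _ _ _ _ hm_pos.ne' hn_pos.ne' hm2 hn2',
       Lgen_det _ _ _ _ _ hm_pos.ne' hn_pos.ne' hm2 hn2'⟩,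
      Lgen_mulVec _ _ _ _ _ C hm_pos.ne' hn_pos.ne' rfl rfl rfl hm2 hn2'⟩
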